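/- Let r ≥ 3 be an integer, let G be a finite triangle-free 4-sunspot-free graph, and let (L_0, …, L_r) be an r-leveling in G such that the subgraph induced on L_r is liberal. Let H be a hole of length at least 6 in the subgraph induced on L_r and let x ∈ L_r \ V(H). Then there is no x-sector of length at most 2 in H. -/

import Mathlib

open SimpleGraph

/-- A `4`-sunspot in `G`: seven pairwise distinct vertices whose induced edge set is exactly
`{x₁x₂, x₂x₃, x₃x₄, x₄x₁, x₁y₁, x₂y₂, x₃y₃}`. -/
def IsFourSunspot {V : Type} (G : SimpleGraph V) (x₁ x₂ x₃ x₄ y₁ y₂ y₃ : V) : Prop :=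
  [x₁, x₂, x₃, x₄, y₁, y₂, y₃].Nodup ∧
  G.Adj x₁ x₂ ∧ G.Adj x₂ x₃ ∧ G.Adj x₃ x₄ ∧ G.Adj x₄ x₁ ∧
  G.Adj x₁ y₁ ∧ G.Adj x₂ y₂ ∧ G.Adj x₃ y₃ ∧
  ¬ G.Adj x₁ x₃ ∧ ¬ G.Adj x₂ x₄ ∧
  ¬ G.Adj x₁ y₂ ∧ ¬ G.Adj x₁ y₃ ∧ ¬ G.Adj x₂ y₁ ∧ ¬ G.Adj x₂ y₃ ∧
  ¬ G.Adj x₃ y₁ ∧ ¬ G.Adj x₃ y₂ ∧ ¬ G.Adj x₄ y₁ ∧ ¬ G.Adj x₄ y₂ ∧ ¬ G.Adj x₄ y₃ ∧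
  ¬ G.Adj y₁ y₂ ∧ ¬ G.Adj y₁ y₃ ∧ ¬ G.Adj y₂ y₃

/-- `G` is `4`-sunspot-free if there is no `4`-sunspot in `G`. -/
def FourSunspotFree {V : Type} (G : SimpleGraph V) : Prop :=
  ∀ x₁ x₂ x₃ x₄ y₁ y₂ y₃ : V, ¬ IsFourSunspot G x₁ x₂ x₃ x₄ y₁ y₂ y₃

/-- The `t`-sun: a `t`-vertex cycle (on `Sum.inl` vertices) together with a pendant
(degree-one) neighbor `Sum.inr i` for each cycle vertex `Sum.inl i`. -/
def Sun (t : ℕ) : SimpleGraph (ZMod t ⊕ ZMod t) :=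
  SimpleGraph.fromEdgeSet
    ((Set.range fun i : ZMod t => s(Sum.inl i, Sum.inl (i + 1))) ∪
     (Set.range fun i : ZMod t => s(Sum.inl i, Sum.inr i)))

/-- `G` is `t`-sun-free: no induced subgraph of `G` is a `t`-sun. -/
def SunFree (t : ℕ) {V : Type} (G : SimpleGraph V) : Prop :=
  IsEmpty (Sun t ↪g G)

/-- The bull: a triangle `0,1,2` with pendant vertices `3` (adjacent to `0`)
and `4` (adjacent to `1`). -/
def Bull : SimpleGraph (Fin 5) :=
  SimpleGraph.fromEdgeSet {s(0, 1), s(1, 2), s(0, 2), s(0, 3), s(1, 4)}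

/-- `G` is bull-free: no induced subgraph of `G` is a bull. -/
def BullFree {V : Type} (G : SimpleGraph V) : Prop :=
  IsEmpty (Bull ↪g G)

/-- A hole in `G`: an induced cycle on at least `4` vertices, given as a graph embedding
of the cycle graph. -/
structure Hole {V : Type} (G : SimpleGraph V) where
  len : ℕ
  four_le : 4 ≤ len
  emb : SimpleGraph.cycleGraph len ↪g G

/-- The vertex set of a hole. -/
def Hole.verts {V : Type} {G : SimpleGraph V} (H : Hole G) : Set V :=
  Set.range H.emb

/-- The edge set of a hole. -/
def Hole.edges {V : Type} {G : SimpleGraph V} (H : Hole G) : Set (Sym2 V) :=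
  {e | ∃ i j : Fin H.len, (SimpleGraph.cycleGraph H.len).Adj i j ∧ e = s(H.emb i, H.emb j)}

/-- `G` is liberal: for distinct non-adjacent `x, y`, neither dominates the other. -/
def Liberal {V : Type} (G : SimpleGraph V) : Prop :=
  ∀ x y : V, x ≠ y → ¬ G.Adj x y →
    (G.neighborSet x \ G.neighborSet y).Nonempty ∧
    (G.neighborSet y \ G.neighborSet x).Nonempty

/-- `G` is non-degenerate: every vertex has degree at least `χ(G) - 1`. -/
def NonDegenerate {V : Type} (G : SimpleGraph V) : Prop :=
  ∀ v : V, G.chromaticNumber ≤ ((G.neighborSet v).ncard : ℕ∞) + 1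

/-- `G` is flapless: for every hole `H` of length at least `6` in `G`, there is no `H`-flap,
i.e. no `4`-hole sharing an edge with `H`. -/
def Flapless {V : Type} (G : SimpleGraph V) : Prop :=
  ∀ H : Hole G, 6 ≤ H.len → ∀ F : Hole G, F.len = 4 → ∀ e ∈ F.edges, e ∉ H.edges

/-- An `r`-leveling in `G`: pairwise disjoint nonempty sets `L 0, …, L r` such that every
vertex of `L i` (`i ≥ 1`) has a neighbor in `L (i-1)`, and edges only join consecutive levels. -/
def IsLeveling {V : Type} (G : SimpleGraph V) (r : ℕ) (L : ℕ → Set V) : Prop :=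
  (∀ i, i ≤ r → (L i).Nonempty) ∧
  (∀ i j, i ≤ r → j ≤ r → i ≠ j → Disjoint (L i) (L j)) ∧
  (∀ i, 1 ≤ i → i ≤ r → ∀ v ∈ L i, ∃ u ∈ L (i - 1), G.Adj u v) ∧
  (∀ i j, i ≤ r → j ≤ r → i ≠ j →
    ∀ u ∈ L i, ∀ v ∈ L j, G.Adj u v → i = j + 1 ∨ j = i + 1)

/-- `x` has no sector of length at most `2` in the hole `H`: there is no edge of `H` with both
ends adjacent to `x`, and no path of length `2` in `H` whose ends are adjacent to `x` and whose
middle vertex is not. -/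
def NoSectorLenLe2 {V : Type} (G : SimpleGraph V) (H : Hole G) (x : V) : Prop :=
  (∀ i j : Fin H.len, (SimpleGraph.cycleGraph H.len).Adj i j →
      ¬ (G.Adj x (H.emb i) ∧ G.Adj x (H.emb j))) ∧
  (∀ i j k : Fin H.len, (SimpleGraph.cycleGraph H.len).Adj i j →
      (SimpleGraph.cycleGraph H.len).Adj j k → i ≠ k →
      ¬ (G.Adj x (H.emb i) ∧ ¬ G.Adj x (H.emb j) ∧ G.Adj x (H.emb k)))

/-- `X` and `Y` are anticomplete in `G`: disjoint, with no edge between them. -/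
def Anticomplete {V : Type} (G : SimpleGraph V) (X Y : Set V) : Prop :=
  Disjoint X Y ∧ ∀ x ∈ X, ∀ y ∈ Y, ¬ G.Adj x y

/-- An `H`-flare in `G`: to each vertex `H.emb i` of the hole `H`, assign a set `Φ i` of at
most one vertex, contained in the neighborhood of `H.emb i` and disjoint from `H`. -/
structure IsFlare {V : Type} (G : SimpleGraph V) (H : Hole G) (Φ : Fin H.len → Set V) : Prop where
  subset_nbhd : ∀ i, Φ i ⊆ G.neighborSet (H.emb i) \ H.verts
  subsingleton : ∀ i, (Φ i).Subsingleton

/-- A flare is full if `|Φ i| = 1` for every `i`. -/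
def IsFullFlare {V : Type} (G : SimpleGraph V) (H : Hole G) (Φ : Fin H.len → Set V) : Prop :=
  IsFlare G H Φ ∧ ∀ i, (Φ i).Nonempty

/-- A flare `Φ` is `d`-safe: for distinct hole vertices at distance at most `d` in `H`,
`Φ(h)` and `Φ[h'] = Φ(h') ∪ {h'}` are anticomplete in `G`. -/
def DSafe {V : Type} (G : SimpleGraph V) (H : Hole G) (Φ : Fin H.len → Set V) (d : ℕ) : Prop :=
  ∀ i j : Fin H.len, i ≠ j → (SimpleGraph.cycleGraph H.len).dist i j ≤ d →
    Anticomplete G (Φ i) (Φ j ∪ {H.emb j})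

private lemma tri3 {V : Type} {G : SimpleGraph V} (htri : G.CliqueFree 3) {a b c : V}
    (hab : G.Adj a b) (hac : G.Adj a c) (hbc : G.Adj b c) : False := by
  classical
  exact htri {a, b, c} (SimpleGraph.is3Clique_triple_iff.2 ⟨hab, hac, hbc⟩)

private lemma mkSpot {V : Type} {G : SimpleGraph V} (htri : G.CliqueFree 3)
    (hspot : FourSunspotFree G) {x₁ x₂ x₃ x₄ y₁ y₂ y₃ : V}
    (e12 : G.Adj x₁ x₂) (e23 : G.Adj x₂ x₃) (e34 : G.Adj x₃ x₄) (e41 : G.Adj x₄ x₁)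
    (f1 : G.Adj x₁ y₁) (f2 : G.Adj x₂ y₂) (f3 : G.Adj x₃ y₃)
    (n13 : ¬G.Adj x₁ x₃) (n24 : ¬G.Adj x₂ x₄)
    (n3y1 : ¬G.Adj x₃ y₁) (n1y3 : ¬G.Adj x₁ y₃) (n4y2 : ¬G.Adj x₄ y₂)
    (g12 : ¬G.Adj y₁ y₂) (g13 : ¬G.Adj y₁ y₃) (g23 : ¬G.Adj y₂ y₃) : False := by
  have n2y1 : ¬G.Adj x₂ y₁ := fun h => tri3 htri e12 f1 h
  have n4y1 : ¬G.Adj x₄ y₁ := fun h => tri3 htri e41.symm f1 h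
  have n1y2 : ¬G.Adj x₁ y₂ := fun h => tri3 htri e12.symm f2 h
  have n3y2 : ¬G.Adj x₃ y₂ := fun h => tri3 htri e23 f2 h
  have n2y3 : ¬G.Adj x₂ y₃ := fun h => tri3 htri e23.symm f3 h
  have n4y3 : ¬G.Adj x₄ y₃ := fun h => tri3 htri e34 f3 h
  have d : ∀ {a b c : V}, G.Adj a c → ¬G.Adj b c → a ≠ b := fun h1 h2 e => h2 (e ▸ h1)
  refine hspot x₁ x₂ x₃ x₄ y₁ y₂ y₃ ⟨?_, e12, e23, e34, e41, f1, f2, f3, n13, n24,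
    n1y2, n1y3, n2y1, n2y3, n3y1, n3y2, n4y1, n4y2, n4y3, g12, g13, g23⟩
  have h12 : x₁ ≠ x₂ := e12.ne
  have h13 : x₁ ≠ x₃ := d f1 (fun h => n3y1 h)
  have h14 : x₁ ≠ x₄ := fun h => e41.ne h.symm
  have h1y1 : x₁ ≠ y₁ := f1.ne
  have h1y2 : x₁ ≠ y₂ := d e41.symm (fun h => n4y2 h.symm)
  have h1y3 : x₁ ≠ y₃ := d e12 (fun h => n2y3 h.symm)
  have h23 : x₂ ≠ x₃ := e23.ne
  have h24 : x₂ ≠ x₄ := d f2 (fun h => n4y2 h)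
  have h2y1 : x₂ ≠ y₁ := d e23 (fun h => n3y1 h.symm)
  have h2y2 : x₂ ≠ y₂ := f2.ne
  have h2y3 : x₂ ≠ y₃ := d e12.symm (fun h => n1y3 h.symm)
  have h34 : x₃ ≠ x₄ := e34.ne
  have h3y1 : x₃ ≠ y₁ := d e34 (fun h => n4y1 h.symm)
  have h3y2 : x₃ ≠ y₂ := d e34 (fun h => n4y2 h.symm)
  have h3y3 : x₃ ≠ y₃ := f3.ne
  have h4y1 : x₄ ≠ y₁ := d e34.symm (fun h => n3y1 h.symm)
  have h4y2 : x₄ ≠ y₂ := d e41 (fun h => n1y2 h.symm)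
  have h4y3 : x₄ ≠ y₃ := d e41 (fun h => n1y3 h.symm)
  have hy12 : y₁ ≠ y₂ := d f1.symm (fun h => n1y2 h.symm)
  have hy13 : y₁ ≠ y₃ := d f1.symm (fun h => n1y3 h.symm)
  have hy23 : y₂ ≠ y₃ := d f2.symm (fun h => n2y3 h.symm)
  simp only [List.nodup_cons, List.mem_cons, List.mem_singleton, List.not_mem_nil, or_false,
    not_or, List.nodup_nil, and_true]
  exact ⟨⟨h12, h13, h14, h1y1, h1y2, h1y3⟩, ⟨h23, h24, h2y1, h2y2, h2y3⟩,
    ⟨h34, h3y1, h3y2, h3y3⟩, ⟨h4y1, h4y2, h4y3⟩, ⟨hy12, hy13⟩, hy23, not_false⟩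

private lemma core {V : Type} {G : SimpleGraph V} (htri : G.CliqueFree 3)
    (hspot : FourSunspotFree G)
    {A'' A' A B C C' C'' x u t y z : V}
    (e1 : G.Adj A'' A') (e2 : G.Adj A' A) (e3 : G.Adj A B) (e4 : G.Adj B C)
    (e5 : G.Adj C C') (e6 : G.Adj C' C'')
    (nA'B : ¬G.Adj A' B) (nAC : ¬G.Adj A C) (nBC' : ¬G.Adj B C')
    (nA''B : ¬G.Adj A'' B) (nA'C : ¬G.Adj A' C) (nAC' : ¬G.Adj A C') (nBC'' : ¬G.Adj B C'')
    (nA''C : ¬G.Adj A'' C) (nA'C' : ¬G.Adj A' C') (nAC'' : ¬G.Adj A C'')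
    (hxA : G.Adj x A) (hxC : G.Adj x C) (nxB : ¬G.Adj x B)
    (huB : G.Adj u B) (htu : G.Adj t u)
    (ntA'' : ¬G.Adj t A'') (ntA' : ¬G.Adj t A') (ntA : ¬G.Adj t A)
    (ntC : ¬G.Adj t C) (ntC' : ¬G.Adj t C') (ntC'' : ¬G.Adj t C'')
    (nty : ¬G.Adj t y) (ntz : ¬G.Adj t z)
    (hyx : G.Adj y x) (nyB : ¬G.Adj y B) (hzB : G.Adj z B) (nzx : ¬G.Adj z x) : False := by
  have nuA : ¬G.Adj u A := fun h => tri3 htri huB h e3.symm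
  have nuC : ¬G.Adj u C := fun h => tri3 htri huB h e4
  have nBx : ¬G.Adj B x := fun h => nxB h.symm
  have nxz : ¬G.Adj x z := fun h => nzx h.symm
  have nBy : ¬G.Adj B y := fun h => nyB h.symm
  by_cases hux : G.Adj u x
  · -- main case: u is adjacent to x
    have hzy : G.Adj z y := by
      by_contra hzy
      exact mkSpot htri hspot huB.symm hux hxA e3 hzB.symm htu.symm hyx.symm
        nBx nuA nxz nBy (fun h => ntA h.symm) (fun h => ntz h.symm) hzy (fun h => nty h)
    have huA' : G.Adj u A' := by
      by_contra huA'
      by_cases hzA' : G.Adj z A'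
      · by_cases hyA' : G.Adj y A'
        · exact tri3 htri hzA'.symm hyA'.symm hzy
        · exact mkSpot htri hspot hux hxA e3 huB.symm htu.symm hyx.symm e2.symm
            nuA nxB (fun h => ntA h.symm) huA' nBy (fun h => nty h) (fun h => ntA' h)
            hyA'
      · exact mkSpot htri hspot e3 huB.symm hux hxA e2.symm hzB.symm htu.symm
          (fun h => nuA h.symm) nBx huA' (fun h => ntA h.symm) nxz
          (fun h => hzA' h.symm) (fun h => ntA' h.symm) (fun h => ntz h.symm)
    have huC' : G.Adj u C' := by
      by_contra huC'
      by_cases hzC' : G.Adj z C'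
      · by_cases hyC' : G.Adj y C'
        · exact tri3 htri hzC'.symm hyC'.symm hzy
        · exact mkSpot htri hspot hux hxC e4.symm huB.symm htu.symm hyx.symm e5
            nuC nxB (fun h => ntC h.symm) huC' nBy (fun h => nty h) (fun h => ntC' h)
            hyC'
      · exact mkSpot htri hspot e4.symm huB.symm hux hxC e5 hzB.symm htu.symm
          (fun h => nuC h.symm) nBx huC' (fun h => ntC h.symm) nxz
          (fun h => hzC' h.symm) (fun h => ntC' h.symm) (fun h => ntz h.symm)
    have hxA'' : G.Adj x A'' := by
      by_contra hxA''
      exact mkSpot htri hspot hux.symm huA' e2 hxA.symm hxC htu.symm e1.symm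
        (fun h => tri3 htri hxA h e2.symm) nuA nA'C hxA'' (fun h => ntA h.symm)
        (fun h => ntC h.symm) (fun h => nA''C h.symm) (fun h => ntA'' h)
    have hxC'' : G.Adj x C'' := by
      by_contra hxC''
      exact mkSpot htri hspot hux.symm huC' e5.symm hxC.symm hxA htu.symm e6
        (fun h => tri3 htri hxC h e5) nuC (fun h => nAC' h.symm) hxC''
        (fun h => ntC h.symm) (fun h => ntA h.symm) nAC'' (fun h => ntC'' h)
    have hzA'' : G.Adj z A'' := by
      by_contra hzA''
      exact mkSpot htri hspot huB.symm hux hxA e3 hzB.symm htu.symm hxA''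
        nBx nuA nxz (fun h => nA''B h.symm) (fun h => ntA h.symm) (fun h => ntz h.symm)
        hzA'' (fun h => ntA'' h)
    have hzC'' : G.Adj z C'' := by
      by_contra hzC''
      exact mkSpot htri hspot huB.symm hux hxC e4.symm hzB.symm htu.symm hxC''
        nBx nuC nxz nBC'' (fun h => ntC h.symm) (fun h => ntz h.symm)
        hzC'' (fun h => ntC'' h)
    exact mkSpot htri hspot e3 e4 hxC.symm hxA e2.symm hzB.symm e5
      nAC nBx (fun h => nA'C h.symm) nAC' nxz
      (fun h => tri3 htri e1 hzA''.symm h) nA'C'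
      (fun h => tri3 htri e6.symm hzC''.symm h.symm)
  · -- u is non-adjacent to x
    by_cases huA' : G.Adj u A'
    · exact mkSpot htri hspot huB.symm huA' e2 e3 e4 htu.symm e1.symm
        (fun h => nA'B h.symm) nuA nA'C (fun h => nA''B h.symm) (fun h => ntA h.symm)
        (fun h => ntC h.symm) (fun h => nA''C h.symm) (fun h => ntA'' h)
    · by_cases huC' : G.Adj u C'
      · exact mkSpot htri hspot huB.symm huC' e5.symm e4.symm e3.symm htu.symm e6
          nBC' nuC (fun h => nAC' h.symm) nBC'' (fun h => ntC h.symm)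
          (fun h => ntA h.symm) nAC'' (fun h => ntC'' h)
      · exact mkSpot htri hspot e3 e4 hxC.symm hxA e2.symm huB.symm e5
          nAC nBx (fun h => nA'C h.symm) nAC' (fun h => hux h.symm)
          (fun h => huA' h.symm) nA'C' huC'

open Fin.CommRing

private lemma sector {V : Type} {G : SimpleGraph V} (htri : G.CliqueFree 3)
    (hspot : FourSunspotFree G) (r : ℕ) (hr : 3 ≤ r) (L : ℕ → Set V)
    (hL : IsLeveling G r L) (hlib : Liberal (G.induce (L r)))
    {m : ℕ} (hn : 6 ≤ m + 2) (emb : SimpleGraph.cycleGraph (m + 2) ↪g G)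
    (hsub : Set.range emb ⊆ L r) {x : V} (hxL : x ∈ L r) (hxH : ∀ q : Fin (m + 2), x ≠ emb q)
    (j : Fin (m + 2)) (hxA : G.Adj x (emb (j - 1))) (nxB : ¬G.Adj x (emb j))
    (hxC : G.Adj x (emb (j + 1))) : False := by
  obtain ⟨hNE, hdisj, hdown, hcons⟩ := hL
  -- numeral facts in Fin (m + 2)
  have hval : ∀ c : ℕ, c < m + 2 → ((c : Fin (m + 2)) : ℕ) = c := fun c hc => by
    simp [Fin.val_natCast, Nat.mod_eq_of_lt hc]
  have h30 : (3 : Fin (m + 2)) ≠ 0 := by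
    have h3 : ((3 : ℕ) : Fin (m + 2)) ≠ ((0 : ℕ) : Fin (m + 2)) := by
      intro h; have := congrArg Fin.val h
      rw [hval 3 (by omega), hval 0 (by omega)] at this; omega
    push_cast at h3; exact h3
  have h40 : (4 : Fin (m + 2)) ≠ 0 := by
    have h4 : ((4 : ℕ) : Fin (m + 2)) ≠ ((0 : ℕ) : Fin (m + 2)) := by
      intro h; have := congrArg Fin.val h
      rw [hval 4 (by omega), hval 0 (by omega)] at this; omega
    push_cast at h4; exact h4
  have h50 : (5 : Fin (m + 2)) ≠ 0 := by
    have h5 : ((5 : ℕ) : Fin (m + 2)) ≠ ((0 : ℕ) : Fin (m + 2)) := by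
      intro h; have := congrArg Fin.val h
      rw [hval 5 (by omega), hval 0 (by omega)] at this; omega
    push_cast at h5; exact h5
  have h21 : (2 : Fin (m + 2)) ≠ 1 := by
    have h2 : ((2 : ℕ) : Fin (m + 2)) ≠ ((1 : ℕ) : Fin (m + 2)) := by
      intro h; have := congrArg Fin.val h
      rw [hval 2 (by omega), hval 1 (by omega)] at this; omega
    push_cast at h2; exact h2
  have h31 : (3 : Fin (m + 2)) ≠ 1 := by
    have h3 : ((3 : ℕ) : Fin (m + 2)) ≠ ((1 : ℕ) : Fin (m + 2)) := by
      intro h; have := congrArg Fin.val h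
      rw [hval 3 (by omega), hval 1 (by omega)] at this; omega
    push_cast at h3; exact h3
  have h41 : (4 : Fin (m + 2)) ≠ 1 := by
    have h4 : ((4 : ℕ) : Fin (m + 2)) ≠ ((1 : ℕ) : Fin (m + 2)) := by
      intro h; have := congrArg Fin.val h
      rw [hval 4 (by omega), hval 1 (by omega)] at this; omega
    push_cast at h4; exact h4
  -- adjacency transfer
  have adj_em : ∀ a b : Fin (m + 2), b - a = 1 → G.Adj (emb a) (emb b) := fun a b h =>
    emb.map_adj_iff.2 (SimpleGraph.cycleGraph_adj.2 (Or.inr h))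
  have nadj_em : ∀ a b : Fin (m + 2), a - b ≠ 1 → b - a ≠ 1 → ¬G.Adj (emb a) (emb b) :=
    fun a b h1 h2 h => (SimpleGraph.cycleGraph_adj.1 (emb.map_adj_iff.1 h)).elim h1 h2
  -- the seven window vertices
  have e1 : G.Adj (emb (j - 3)) (emb (j - 2)) := adj_em _ _ (by ring)
  have e2 : G.Adj (emb (j - 2)) (emb (j - 1)) := adj_em _ _ (by ring)
  have e3 : G.Adj (emb (j - 1)) (emb j) := adj_em _ _ (by ring)
  have e4 : G.Adj (emb j) (emb (j + 1)) := adj_em _ _ (by ring)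
  have e5 : G.Adj (emb (j + 1)) (emb (j + 2)) := adj_em _ _ (by ring)
  have e6 : G.Adj (emb (j + 2)) (emb (j + 3)) := adj_em _ _ (by ring)
  -- window nonedges (gaps 2, 3, 4)
  have nA'B : ¬G.Adj (emb (j - 2)) (emb j) :=
    nadj_em _ _ (fun h => h30 (by linear_combination -h)) (fun h => h21 (by linear_combination h))
  have nAC : ¬G.Adj (emb (j - 1)) (emb (j + 1)) :=
    nadj_em _ _ (fun h => h30 (by linear_combination -h)) (fun h => h21 (by linear_combination h))
  have nBC' : ¬G.Adj (emb j) (emb (j + 2)) :=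
    nadj_em _ _ (fun h => h30 (by linear_combination -h)) (fun h => h21 (by linear_combination h))
  have nA''B : ¬G.Adj (emb (j - 3)) (emb j) :=
    nadj_em _ _ (fun h => h40 (by linear_combination -h)) (fun h => h31 (by linear_combination h))
  have nA'C : ¬G.Adj (emb (j - 2)) (emb (j + 1)) :=
    nadj_em _ _ (fun h => h40 (by linear_combination -h)) (fun h => h31 (by linear_combination h))
  have nAC' : ¬G.Adj (emb (j - 1)) (emb (j + 2)) :=
    nadj_em _ _ (fun h => h40 (by linear_combination -h)) (fun h => h31 (by linear_combination h))
  have nBC'' : ¬G.Adj (emb j) (emb (j + 3)) :=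
    nadj_em _ _ (fun h => h40 (by linear_combination -h)) (fun h => h31 (by linear_combination h))
  have nA''C : ¬G.Adj (emb (j - 3)) (emb (j + 1)) :=
    nadj_em _ _ (fun h => h50 (by linear_combination -h)) (fun h => h41 (by linear_combination h))
  have nA'C' : ¬G.Adj (emb (j - 2)) (emb (j + 2)) :=
    nadj_em _ _ (fun h => h50 (by linear_combination -h)) (fun h => h41 (by linear_combination h))
  have nAC'' : ¬G.Adj (emb (j - 1)) (emb (j + 3)) :=
    nadj_em _ _ (fun h => h50 (by linear_combination -h)) (fun h => h41 (by linear_combination h))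
  -- memberships
  have memL : ∀ q : Fin (m + 2), emb q ∈ L r := fun q => hsub ⟨q, rfl⟩
  -- u and t from the leveling
  obtain ⟨u, huL, huB⟩ := hdown r (by omega) le_rfl (emb j) (memL j)
  obtain ⟨t, htL, htu⟩ := hdown (r - 1) (by omega) (by omega) u huL
  have tnadjL : ∀ w, w ∈ L r → ¬G.Adj t w := fun w hw h => by
    rcases hcons (r - 1 - 1) r (by omega) le_rfl (by omega) t htL w hw h with h' | h' <;> omega
  -- y and z from liberality
  have hlib' := hlib ⟨x, hxL⟩ ⟨emb j, memL j⟩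
    (by simp only [ne_eq, Subtype.mk.injEq]; exact hxH j) (by simpa using nxB)
  obtain ⟨⟨y, hyL⟩, hy⟩ := hlib'.1
  obtain ⟨⟨z, hzL⟩, hz⟩ := hlib'.2
  have hyx : G.Adj y x := by
    have : G.Adj x y := by simpa using hy.1
    exact this.symm
  have nyB : ¬G.Adj y (emb j) := by
    have : ¬G.Adj (emb j) y := by simpa using hy.2
    exact fun h => this h.symm
  have hzB : G.Adj z (emb j) := by
    have : G.Adj (emb j) z := by simpa using hz.1
    exact this.symm
  have nzx : ¬G.Adj z x := by
    have : ¬G.Adj x z := by simpa using hz.2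
    exact fun h => this h.symm
  exact core htri hspot e1 e2 e3 e4 e5 e6 nA'B nAC nBC' nA''B nA'C nAC' nBC'' nA''C nA'C' nAC''
    hxA hxC nxB huB htu
    (tnadjL _ (memL _)) (tnadjL _ (memL _)) (tnadjL _ (memL _)) (tnadjL _ (memL _))
    (tnadjL _ (memL _)) (tnadjL _ (memL _)) (tnadjL _ hyL) (tnadjL _ hzL)
    hyx nyB hzB nzx

/-- Let `r ≥ 3`, let `G` be finite, triangle-free and `4`-sunspot-free, let
`(L 0, …, L r)` be an `r`-leveling in `G` such that the subgraph induced on `L r` is liberal,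
let `H` be a hole of length at least `6` in the subgraph induced on `L r`, and let
`x ∈ L r \ V(H)`. Then there is no `x`-sector of length at most `2` in `H`. -/
theorem stmt_9 {V : Type} [Fintype V] (r : ℕ) (hr : 3 ≤ r) (G : SimpleGraph V)
    (htri : G.CliqueFree 3)
    (hspot : FourSunspotFree G)
    (L : ℕ → Set V) (hL : IsLeveling G r L)
    (hlib : Liberal (G.induce (L r)))
    (H : Hole G) (hHsub : H.verts ⊆ L r) (hHlen : 6 ≤ H.len)
    (x : V) (hx : x ∈ L r \ H.verts) :
    NoSectorLenLe2 G H x := by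
  obtain ⟨hxL, hxH⟩ := hx
  obtain ⟨len, h4le, emb⟩ := H
  simp only [Hole.verts] at hxH hHsub
  simp only at hHlen
  obtain ⟨m, rfl⟩ : ∃ m, len = m + 2 := ⟨len - 2, by omega⟩
  have hxH' : ∀ q : Fin (m + 2), x ≠ emb q := fun q h => hxH ⟨q, h.symm⟩
  constructor
  · rintro i j hij ⟨h1, h2⟩
    exact tri3 htri h1 h2 (emb.map_adj_iff.2 hij)
  · rintro i j k hij hjk hik ⟨h1, h2, h3⟩
    rw [SimpleGraph.cycleGraph_adj] at hij hjk
    have hi : i = j + 1 ∨ i = j - 1 := by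
      rcases hij with h | h
      · left; rw [sub_eq_iff_eq_add] at h; rw [h]; ring
      · right; rw [sub_eq_iff_eq_add] at h; rw [h]; ring
    have hk : k = j + 1 ∨ k = j - 1 := by
      rcases hjk with h | h
      · right; rw [sub_eq_iff_eq_add] at h; rw [h]; ring
      · left; rw [sub_eq_iff_eq_add] at h; rw [h]; ring
    rcases hi with hi | hi <;> rcases hk with hk | hk
    · exact hik (hi.trans hk.symm)
    · exact sector htri hspot r hr L hL hlib hHlen emb hHsub hxL hxH' j
        (hk ▸ h3) h2 (hi ▸ h1)
    · exact sector htri hspot r hr L hL hlib hHlen emb hHsub hxL hxH' j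
        (hi ▸ h1) h2 (hk ▸ h3)
    · exact hik (hi.trans hk.symm)
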